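/- Let A be a unital C*-algebra and a ∈ A a positive element. Then a is invertible in A if and only if the following two conditions hold together: (1) f(a) > 0 for every nonzero positive continuous linear functional f on A, and (2) there exist real numbers α, β with 0 < α < β and constants c, C > 0 such that c · r_{a^α}(f) ≤ r_{a^β}(f) ≤ C · r_{a^α}(f) for every hermitian continuous linear functional f on A. -/

import Mathlib

open scoped ComplexOrder NNReal

variable {A : Type*} [CStarAlgebra A] [PartialOrder A] [StarOrderedRing A]

/-- A continuous linear functional on a C*-algebra is positive if it is nonnegative on
positive elements (using the complex order). -/
def IsPosFunctional {A : Type*} [CStarAlgebra A] [PartialOrder A] [StarOrderedRing A]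
    (f : A →L[ℂ] ℂ) : Prop :=
  ∀ x : A, 0 ≤ x → 0 ≤ f x

/-- A continuous linear functional is hermitian if `f (star x) = conj (f x)` for all `x`. -/
def IsHermitianFunctional {A : Type*} [CStarAlgebra A] (f : A →L[ℂ] ℂ) : Prop :=
  ∀ x : A, f (star x) = starRingEnd ℂ (f x)

/-- The seminorm `r_a` associated with a positive element `a`:
`r_a(f) = inf { f₁(a) + f₂(a) | f = f₁ - f₂, f₁, f₂ positive }`. -/
noncomputable def rSeminorm {A : Type*} [CStarAlgebra A] [PartialOrder A] [StarOrderedRing A]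
    (a : A) (f : A →L[ℂ] ℂ) : ℝ :=
  sInf { r : ℝ | ∃ f₁ f₂ : A →L[ℂ] ℂ, IsPosFunctional f₁ ∧ IsPosFunctional f₂ ∧
    f = f₁ - f₂ ∧ (r : ℂ) = f₁ a + f₂ a }

namespace RSemAux

def decompSet (b : A) (f : A →L[ℂ] ℂ) : Set ℝ :=
  { r : ℝ | ∃ f₁ f₂ : A →L[ℂ] ℂ, IsPosFunctional f₁ ∧ IsPosFunctional f₂ ∧
    f = f₁ - f₂ ∧ (r : ℂ) = f₁ b + f₂ b }

lemma rSeminorm_eq (b : A) (f : A →L[ℂ] ℂ) : rSeminorm b f = sInf (decompSet b f) := rfl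

lemma value_real {b : A} (hb : 0 ≤ b) {g : A →L[ℂ] ℂ} (hg : IsPosFunctional g) :
    ((g b).re : ℂ) = g b ∧ 0 ≤ (g b).re := by
  have := hg b hb
  rw [Complex.le_def] at this
  refine ⟨Complex.ext (by simp) (by simp [← this.2]), by simpa using this.1⟩

lemma sum_value_real {b : A} (hb : 0 ≤ b) {f₁ f₂ : A →L[ℂ] ℂ}
    (h₁ : IsPosFunctional f₁) (h₂ : IsPosFunctional f₂) :
    (((f₁ b + f₂ b).re : ℝ) : ℂ) = f₁ b + f₂ b := by
  obtain ⟨e1, -⟩ := value_real hb h₁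
  obtain ⟨e2, -⟩ := value_real hb h₂
  push_cast [Complex.add_re]
  rw [e1, e2]

lemma mem_decompSet {b : A} (hb : 0 ≤ b) {f f₁ f₂ : A →L[ℂ] ℂ}
    (h₁ : IsPosFunctional f₁) (h₂ : IsPosFunctional f₂) (hd : f = f₁ - f₂) :
    (f₁ b + f₂ b).re ∈ decompSet b f :=
  ⟨f₁, f₂, h₁, h₂, hd, sum_value_real hb h₁ h₂⟩

lemma nonneg_of_mem {b : A} (hb : 0 ≤ b) {f : A →L[ℂ] ℂ} {r : ℝ}
    (hr : r ∈ decompSet b f) : 0 ≤ r := by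
  obtain ⟨f₁, f₂, h₁, h₂, -, hv⟩ := hr
  have e1 := value_real hb h₁
  have e2 := value_real hb h₂
  have : (r : ℂ).re = (f₁ b + f₂ b).re := by rw [hv]
  simp only [Complex.ofReal_re, Complex.add_re] at this
  linarith [e1.2, e2.2]

lemma bddBelow (b : A) (hb : 0 ≤ b) (f : A →L[ℂ] ℂ) : BddBelow (decompSet b f) :=
  ⟨0, fun _ hr => nonneg_of_mem hb hr⟩

lemma nonempty_iff {b b' : A} (hb : 0 ≤ b) (hb' : 0 ≤ b') (f : A →L[ℂ] ℂ) :
    (decompSet b f).Nonempty ↔ (decompSet b' f).Nonempty := by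
  constructor
  · rintro ⟨r, f₁, f₂, h₁, h₂, hd, -⟩
    exact ⟨_, mem_decompSet hb' h₁ h₂ hd⟩
  · rintro ⟨r, f₁, f₂, h₁, h₂, hd, -⟩
    exact ⟨_, mem_decompSet hb h₁ h₂ hd⟩

lemma re_le_re {b b' : A} {K : ℝ} (h : b ≤ (K : ℂ) • b') {g : A →L[ℂ] ℂ}
    (hg : IsPosFunctional g) : (g b).re ≤ K * (g b').re := by
  have h0 := hg _ (sub_nonneg.mpr h)
  rw [map_sub] at h0
  have h1 : g b ≤ g ((K:ℂ) • b') := sub_nonneg.mp h0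
  rw [Complex.le_def] at h1
  have : (g ((K:ℂ) • b')).re = K * (g b').re := by
    rw [map_smul]
    simp [Complex.mul_re]
  linarith [h1.1, this.le, this.ge]

/-- If `b ≤ K • b'` then `rSeminorm b f ≤ K * rSeminorm b' f`. -/
lemma rSeminorm_le_mul {b b' : A} (hb : 0 ≤ b) (hb' : 0 ≤ b') {K : ℝ} (hK : 0 ≤ K)
    (h : b ≤ (K : ℂ) • b') (f : A →L[ℂ] ℂ) :
    rSeminorm b f ≤ K * rSeminorm b' f := by
  rw [rSeminorm_eq, rSeminorm_eq]
  by_cases hne : (decompSet b' f).Nonempty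
  · have key : ∀ r' ∈ decompSet b' f, sInf (decompSet b f) ≤ K * r' := by
      rintro r' ⟨f₁, f₂, h₁, h₂, hd, hv⟩
      have hr' : r' = (f₁ b').re + (f₂ b').re := by
        have : (r' : ℂ).re = (f₁ b' + f₂ b').re := by rw [hv]
        simpa using this
      have hmem := mem_decompSet hb h₁ h₂ hd
      have hle : (f₁ b + f₂ b).re ≤ K * r' := by
        have i1 := re_le_re h h₁
        have i2 := re_le_re h h₂
        rw [hr']
        simp only [Complex.add_re]
        linarith
      exact le_trans (csInf_le (bddBelow b hb f) hmem) hle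
    rcases eq_or_lt_of_le hK with rfl | hK'
    · obtain ⟨r', hr'⟩ := hne
      simpa using key r' hr'
    · rw [← div_le_iff₀' hK']
      refine le_csInf hne fun r' hr' => ?_
      rw [div_le_iff₀' hK']
      exact key r' hr'
  · have hne' : ¬ (decompSet b f).Nonempty := fun h' =>
      hne ((nonempty_iff hb hb' f).mp h')
    rw [Set.not_nonempty_iff_eq_empty] at hne hne'
    rw [hne, hne', Real.sInf_empty, mul_zero]

/-- If `K • b' ≤ b` then `K * rSeminorm b' f ≤ rSeminorm b f`. -/
lemma mul_le_rSeminorm {b b' : A} (hb : 0 ≤ b) (hb' : 0 ≤ b') {K : ℝ} (hK : 0 ≤ K)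
    (h : (K : ℂ) • b' ≤ b) (f : A →L[ℂ] ℂ) :
    K * rSeminorm b' f ≤ rSeminorm b f := by
  rw [rSeminorm_eq, rSeminorm_eq]
  by_cases hne : (decompSet b f).Nonempty
  · refine le_csInf hne ?_
    rintro r ⟨f₁, f₂, h₁, h₂, hd, hv⟩
    have hr : r = (f₁ b).re + (f₂ b).re := by
      have : (r : ℂ).re = (f₁ b + f₂ b).re := by rw [hv]
      simpa using this
    have hmem := mem_decompSet hb' h₁ h₂ hd
    have h1 : K * (f₁ b').re ≤ (f₁ b).re := by
      have h0 := h₁ _ (sub_nonneg.mpr h)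
      rw [map_sub] at h0
      have h1 := sub_nonneg.mp h0
      rw [Complex.le_def] at h1
      have : (f₁ ((K:ℂ) • b')).re = K * (f₁ b').re := by
        rw [map_smul]; simp [Complex.mul_re]
      linarith [h1.1, this.le, this.ge]
    have h2 : K * (f₂ b').re ≤ (f₂ b).re := by
      have h0 := h₂ _ (sub_nonneg.mpr h)
      rw [map_sub] at h0
      have h1 := sub_nonneg.mp h0
      rw [Complex.le_def] at h1
      have : (f₂ ((K:ℂ) • b')).re = K * (f₂ b').re := by
        rw [map_smul]; simp [Complex.mul_re]
      linarith [h1.1, this.le, this.ge]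
    calc K * sInf (decompSet b' f) ≤ K * ((f₁ b' + f₂ b').re) := by
          refine mul_le_mul_of_nonneg_left (csInf_le (bddBelow b' hb' f) hmem) hK
      _ ≤ r := by rw [hr]; simp only [Complex.add_re]; linarith
  · have hne' : ¬ (decompSet b' f).Nonempty := fun h' =>
      hne ((nonempty_iff hb' hb f).mp h')
    rw [Set.not_nonempty_iff_eq_empty] at hne hne'
    rw [hne, hne', Real.sInf_empty, mul_zero]

lemma star_mul_self_eq {x : A} (hx : IsSelfAdjoint x) (n : ℝ) :
    star (x - ((n : ℂ) * Complex.I) • 1) * (x - ((n : ℂ) * Complex.I) • 1)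
      = x * x + ((n : ℂ)^2) • 1 := by
  have hs : star (x - ((n : ℂ) * Complex.I) • 1) = x + ((n : ℂ) * Complex.I) • 1 := by
    rw [star_sub, hx.star_eq, star_smul, star_one]
    simp [Complex.ext_iff]
  rw [hs]
  have hI : ((n:ℂ) * Complex.I) * ((n:ℂ) * Complex.I) = -((n:ℂ)^2) := by
    ring_nf
    rw [Complex.I_sq]
    ring
  rw [add_mul, mul_sub, mul_sub]
  simp only [smul_mul_assoc, mul_smul_comm, one_mul, mul_one, smul_smul, hI, neg_smul]
  abel

/-- A norm-one unital functional on a unital C*-algebra is positive. -/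
lemma isPos_of_unital_norm [Nontrivial A] {g : A →L[ℂ] ℂ} (h1 : g 1 = 1) (hnorm : ‖g‖ = 1) :
    ∀ x : A, 0 ≤ x → 0 ≤ g x := by
  intro x hx
  have hsa : IsSelfAdjoint x := hx.isSelfAdjoint
  have step1 : ∀ n : ℝ, ((g x).re)^2 + ((g x).im - n)^2 ≤ ‖x‖^2 + n^2 := by
    intro n
    set y := x - ((n : ℂ) * Complex.I) • 1 with hy
    have hgy : g y = g x - (n:ℂ) * Complex.I := by
      simp [hy, map_sub, map_smul, h1]
    have hnormy : ‖y‖^2 ≤ ‖x‖^2 + n^2 := by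
      have hcs : ‖star y * y‖ = ‖y‖ * ‖y‖ := CStarRing.norm_star_mul_self
      have hrw : star y * y = x * x + ((n : ℂ)^2) • 1 := star_mul_self_eq hsa n
      have hxx : ‖x * x‖ = ‖x‖ * ‖x‖ := by
        have := CStarRing.norm_star_mul_self (x := x)
        rwa [hsa.star_eq] at this
      have : ‖star y * y‖ ≤ ‖x‖^2 + n^2 := by
        rw [hrw]
        calc ‖x * x + ((n : ℂ)^2) • 1‖ ≤ ‖x * x‖ + ‖((n : ℂ)^2) • (1:A)‖ := norm_add_le _ _
          _ ≤ ‖x‖^2 + n^2 := by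
              rw [hxx, norm_smul, norm_one, mul_one]
              simp [sq, abs_of_nonneg, mul_self_nonneg]
      nlinarith [norm_nonneg y, hcs ▸ this]
    have hb : ‖g y‖ ≤ ‖y‖ := by
      calc ‖g y‖ ≤ ‖g‖ * ‖y‖ := g.le_opNorm y
        _ = ‖y‖ := by rw [hnorm, one_mul]
    have habs : ‖g y‖^2 = ((g x).re)^2 + ((g x).im - n)^2 := by
      rw [hgy, Complex.sq_norm]
      simp [Complex.normSq_apply, Complex.sub_re, Complex.sub_im]
      ring
    nlinarith [norm_nonneg (g y), norm_nonneg y]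
  have him : (g x).im = 0 := by
    by_contra him
    set R := (g x).re; set I := (g x).im
    have h2 : ∀ n : ℝ, R^2 + I^2 - 2*n*I ≤ ‖x‖^2 := by
      intro n; have := step1 n; nlinarith [this]
    have := h2 ((R^2 + I^2 - ‖x‖^2 - 1)/(2*I))
    have h3 : 2 * ((R^2 + I^2 - ‖x‖^2 - 1)/(2*I)) * I = R^2 + I^2 - ‖x‖^2 - 1 := by
      field_simp
    linarith [h3 ▸ this]
  have hre : 0 ≤ (g x).re := by
    set t := ‖x‖ with ht
    have hx_le : x ≤ algebraMap ℝ A t := hsa.le_algebraMap_norm_self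
    set u := algebraMap ℝ A t - x with hu
    have humem : u ∈ Set.Icc (0:A) (algebraMap ℝ A t) := by
      constructor
      · rwa [hu, sub_nonneg]
      · rw [hu]
        have : algebraMap ℝ A t - x ≤ algebraMap ℝ A t - 0 := sub_le_sub_left hx _
        simpa using this
    have hnu : ‖u‖ ≤ t :=
      ((CStarAlgebra.mem_Icc_algebraMap_iff_norm_le (norm_nonneg x)).mp humem).2
    have hgu : g u = (t : ℂ) - g x := by
      rw [hu, map_sub]
      congr 1
      rw [Algebra.algebraMap_eq_smul_one, ← Complex.coe_smul, map_smul, h1]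
      simp
    have hb : ‖g u‖ ≤ t := by
      calc ‖g u‖ ≤ ‖g‖ * ‖u‖ := g.le_opNorm u
        _ ≤ t := by rw [hnorm, one_mul]; exact hnu
    have hgx : g x = ((g x).re : ℂ) := by
      exact (Complex.ext (by simp) (by simp [him])).symm
    rw [hgu, hgx] at hb
    rw [← Complex.ofReal_sub, Complex.norm_real] at hb
    have := abs_le.mp (by simpa using hb)
    linarith [this.1]
  have hgx : g x = ((g x).re : ℂ) := (Complex.ext (by simp) (by simp [him])).symm
  rw [hgx]
  exact_mod_cast Complex.zero_le_real.mpr hre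

/-- If a positive element is not invertible, there is a norm-one unital functional
vanishing on it. -/
lemma exists_vanishing_functional [Nontrivial A] {a : A} (ha : 0 ≤ a) (hu : ¬IsUnit a) :
    ∃ g : A →L[ℂ] ℂ, g 1 = 1 ∧ ‖g‖ = 1 ∧ g a = 0 := by
  haveI : IsStarNormal a := ha.isSelfAdjoint.isStarNormal
  have h0 : (0:ℂ) ∈ spectrum ℂ a := spectrum.zero_mem (R := ℂ) hu
  set S := StarAlgebra.elemental ℂ a with hS
  obtain ⟨φ, hφ⟩ := (StarAlgebra.elemental.bijective_characterSpaceToSpectrum a).2 ⟨0, h0⟩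
  haveI : Nontrivial S := ⟨1, 0, fun h => one_ne_zero (congrArg Subtype.val h : (1:A) = 0)⟩
  have hφa : φ ⟨a, StarAlgebra.elemental.self_mem ℂ a⟩ = 0 := congrArg Subtype.val hφ
  let Φ : S →ₐ[ℂ] ℂ := WeakDual.CharacterSpace.equivAlgHom φ
  let ψ : S →L[ℂ] ℂ := (φ : WeakDual ℂ S)
  have hψΦ : ∀ x : S, ψ x = Φ x := fun x => rfl
  have hbound : ∀ x : S, ‖ψ x‖ ≤ ‖x‖ := by
    intro x
    rw [hψΦ]
    exact spectrum.norm_le_norm_of_mem (AlgHom.apply_mem_spectrum Φ x)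
  have hψ1 : ψ 1 = 1 := by rw [hψΦ]; exact map_one Φ
  have hψnorm : ‖ψ‖ = 1 := by
    refine le_antisymm (ψ.opNorm_le_bound zero_le_one fun x => by simpa using hbound x) ?_
    calc (1:ℝ) = ‖ψ 1‖ := by rw [hψ1]; simp
      _ ≤ ‖ψ‖ * ‖(1:S)‖ := ψ.le_opNorm 1
      _ = ‖ψ‖ := by rw [norm_one, mul_one]
  obtain ⟨g, hg, hgnorm⟩ := exists_extension_norm_eq (Subalgebra.toSubmodule S.toSubalgebra) ψ
  refine ⟨g, ?_, by rw [hgnorm]; exact hψnorm, ?_⟩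
  · have h := hg ⟨1, one_mem S⟩
    exact h.trans hψ1
  · have h := hg ⟨a, StarAlgebra.elemental.self_mem ℂ a⟩
    exact h.trans hφa

/-- A nonzero positive functional is strictly positive at `1`. -/
lemma pos_functional_one_pos {f : A →L[ℂ] ℂ} (hf : IsPosFunctional f)
    (hne : f ≠ 0) : 0 < f 1 := by
  have h1 : 0 ≤ f 1 := hf 1 zero_le_one
  rcases eq_or_lt_of_le h1 with heq | hlt
  · exfalso
    apply hne
    have hzero : ∀ x : A, 0 ≤ x → f x = 0 := by
      intro x hx
      have hup : f x ≤ f (algebraMap ℝ A ‖x‖) := by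
        have := hf _ (sub_nonneg.mpr (hx.isSelfAdjoint.le_algebraMap_norm_self))
        rw [map_sub] at this
        exact sub_nonneg.mp this
      have : f (algebraMap ℝ A ‖x‖) = 0 := by
        rw [Algebra.algebraMap_eq_smul_one, ← Complex.coe_smul, map_smul, ← heq]
        simp
      exact le_antisymm (this ▸ hup) (hf x hx)
    have hsa : ∀ y : A, IsSelfAdjoint y → f y = 0 := by
      intro y hy
      have := CFC.posPart_sub_negPart y hy
      calc f y = f (y⁺) - f (y⁻) := by rw [← map_sub, this]
        _ = 0 := by
          rw [hzero _ (CFC.posPart_nonneg y), hzero _ (CFC.negPart_nonneg y), sub_zero]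
    ext x
    have hdecomp := realPart_add_I_smul_imaginaryPart x
    calc f x = f (realPart x) + Complex.I * f (imaginaryPart x) := by
          rw [← hdecomp, map_add, map_smul]; simp
      _ = 0 := by
          rw [hsa _ (realPart x).2, hsa _ (imaginaryPart x).2]
          simp
  · exact hlt

lemma smul_le_mul_self {a : A} (ha : 0 ≤ a) {r : ℝ} (hra : algebraMap ℝ A r ≤ a) :
    (r : ℂ) • a ≤ a * a := by
  set s := CFC.sqrt a with hs
  have hs0 : 0 ≤ s := CFC.sqrt_nonneg a
  have hss : s * s = a := CFC.sqrt_mul_sqrt_self a ha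
  have hconj := star_left_conjugate_le_conjugate hra s
  rw [hs0.isSelfAdjoint.star_eq] at hconj
  calc (r : ℂ) • a = s * algebraMap ℝ A r * s := by
        rw [← Algebra.commutes r s, mul_assoc, hss, ← Algebra.smul_def, Complex.coe_smul]
    _ ≤ s * a * s := hconj
    _ = a * a := by rw [← hss]; noncomm_ring

lemma mul_self_le_smul {a : A} (ha : 0 ≤ a) {r : ℝ} (har : a ≤ algebraMap ℝ A r) :
    a * a ≤ (r : ℂ) • a := by
  set s := CFC.sqrt a with hs
  have hs0 : 0 ≤ s := CFC.sqrt_nonneg a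
  have hss : s * s = a := CFC.sqrt_mul_sqrt_self a ha
  have hconj := star_left_conjugate_le_conjugate har s
  rw [hs0.isSelfAdjoint.star_eq] at hconj
  calc a * a = s * a * s := by rw [← hss]; noncomm_ring
    _ ≤ s * algebraMap ℝ A r * s := hconj
    _ = (r : ℂ) • a := by
        rw [← Algebra.commutes r s, mul_assoc, hss, ← Algebra.smul_def, Complex.coe_smul]

end RSemAux

open RSemAux in
/-- A positive element `a` is invertible iff `f(a) > 0` for every nonzero positive
functional `f` and `r_{a^α}` is equivalent to `r_{a^β}` for some `0 < α < β`. -/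
theorem isUnit_iff_faithful_and_rpow_equiv (a : A) (ha : 0 ≤ a) :
    IsUnit a ↔
      ((∀ f : A →L[ℂ] ℂ, IsPosFunctional f → f ≠ 0 → 0 < f a) ∧
        ∃ α β c C : ℝ, 0 < α ∧ α < β ∧ 0 < c ∧ 0 < C ∧
          ∀ f : A →L[ℂ] ℂ, IsHermitianFunctional f →
            c * rSeminorm (a ^ α) f ≤ rSeminorm (a ^ β) f ∧
              rSeminorm (a ^ β) f ≤ C * rSeminorm (a ^ α) f) := by
  rcases subsingleton_or_nontrivial A with hsub | hnt
  · constructor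
    · intro _
      refine ⟨fun f hf hne => absurd ?_ hne, 1, 2, 1, 1, one_pos, one_lt_two, one_pos,
        one_pos, fun f _ => ?_⟩
      · ext x
        rw [Subsingleton.elim x 0, map_zero]
        rfl
      · rw [Subsingleton.elim (a ^ (2:ℝ)) (a ^ (1:ℝ)), one_mul]
        exact ⟨le_refl _, le_refl _⟩
    · intro _
      exact isUnit_of_subsingleton a
  constructor
  · intro hunit
    obtain ⟨r, hr, hra⟩ : ∃ r > 0, algebraMap ℝ A r ≤ a := by
      refine (CFC.exists_pos_algebraMap_le_iff ha.isSelfAdjoint).mpr fun x hx => ?_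
      have h0 : (0:ℝ) ∉ spectrum ℝ a := spectrum.zero_notMem ℝ hunit
      have hx0 := spectrum_nonneg_of_nonneg ha hx
      cases hx0.lt_or_eq with
      | inl h => exact h
      | inr h => exact absurd (h ▸ hx) h0
    have hnorm_pos : 0 < ‖a‖ := norm_pos_iff.mpr hunit.ne_zero
    have haa : 0 ≤ a * a := by
      have := star_mul_self_nonneg a
      rwa [ha.isSelfAdjoint.star_eq] at this
    have hpow1 : a ^ (1:ℝ) = a := CFC.rpow_one a ha
    have hpow2 : a ^ (2:ℝ) = a * a := by
      have h := CFC.rpow_natCast a 2 ha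
      norm_num at h
      rw [h, sq]
    refine ⟨fun f hf hne => ?_, 1, 2, r, ‖a‖, one_pos, one_lt_two, hr, hnorm_pos,
      fun f _ => ?_⟩
    · have h1 : 0 < f 1 := pos_functional_one_pos hf hne
      have hfa : f (algebraMap ℝ A r) ≤ f a := by
        have := hf _ (sub_nonneg.mpr hra)
        rw [map_sub] at this
        exact sub_nonneg.mp this
      have heval : f (algebraMap ℝ A r) = (r : ℂ) * f 1 := by
        rw [Algebra.algebraMap_eq_smul_one, ← Complex.coe_smul, map_smul]
        simp
      have hrC : (0:ℂ) < (r:ℂ) := by exact_mod_cast hr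
      calc (0:ℂ) < (r:ℂ) * f 1 := mul_pos hrC h1
        _ = f (algebraMap ℝ A r) := heval.symm
        _ ≤ f a := hfa
    · rw [hpow1, hpow2]
      constructor
      · exact mul_le_rSeminorm haa ha hr.le (smul_le_mul_self ha hra) f
      · exact rSeminorm_le_mul haa ha hnorm_pos.le
          (mul_self_le_smul ha ha.isSelfAdjoint.le_algebraMap_norm_self) f
  · rintro ⟨h1, -⟩
    by_contra hu
    obtain ⟨g, hg1, hgnorm, hga⟩ := exists_vanishing_functional ha hu
    have hgpos : IsPosFunctional g := isPos_of_unital_norm hg1 hgnorm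
    have hgne : g ≠ 0 := fun h => by
      rw [h] at hg1
      exact one_ne_zero hg1.symm
    have := h1 g hgpos hgne
    rw [hga] at this
    exact lt_irrefl _ this
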